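/- For every h₀ ≥ 2 there exists a strictly decreasing sequence (A_q) of sets of integers with intersection A such that hA equals ⋂_q hA_q for all h ∈ {1, ..., h₀-1}, but h₀A ≠ ⋂_q h₀A_q. -/

import Mathlib

open Pointwise

/-- The `h`-fold sumset: all sums of `h` not necessarily distinct elements of `S`
(for `h ≥ 1`; by convention `hfold 0 S = S`). -/
def hfold {α : Type*} [Add α] : ℕ → Set α → Set α
  | 0, S => S
  | 1, S => S
  | n + 2, S => hfold (n + 1) S + S

def inA (h₀ q : ℕ) (x : ℤ) : Prop :=
  x = 0 ∨ ∃ r : ℕ, q + 1 ≤ r ∧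
    (x = (2*(h₀:ℤ)^2)^r ∨ x = 1 - ((h₀:ℤ)-1) * (2*(h₀:ℤ)^2)^r)

lemma inA_def (h₀ q : ℕ) (x : ℤ) : inA h₀ q x =
  (x = 0 ∨ ∃ r : ℕ, q + 1 ≤ r ∧
    (x = (2*(h₀:ℤ)^2)^r ∨ x = 1 - ((h₀:ℤ)-1) * (2*(h₀:ℤ)^2)^r)) := rfl

lemma abs_step {X B L : ℤ} (hB : 0 ≤ B) (h : |X| ≤ L * B) : |X| ≤ (L+1) * B := by nlinarith

set_option maxHeartbeats 2000000 in
lemma inv_lemma (h₀ : ℕ) (hh₀ : 2 ≤ h₀) (q : ℕ) :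
    ∀ l : List ℤ, (∀ e ∈ l, inA h₀ q e) → l.length ≤ h₀ - 1 →
    (∀ e ∈ l, e = 0) ∨ ∃ R a b : ℕ, q + 1 ≤ R ∧ 1 ≤ a + b ∧ a + b ≤ l.length ∧
      |l.sum - ((a:ℤ) - ((h₀:ℤ)-1)*(b:ℤ)) * (2*(h₀:ℤ)^2)^R|
        ≤ (l.length : ℤ) * (((h₀:ℤ)-1) * (2*(h₀:ℤ)^2)^(R-1) + 1) := by
  set n : ℤ := 2*(h₀:ℤ)^2 with hn_def
  set c : ℤ := (h₀:ℤ)-1 with hc_def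
  have hh2 : (2:ℤ) ≤ (h₀:ℤ) := by exact_mod_cast hh₀
  have hc : 1 ≤ c := by omega
  have hn2 : 2 ≤ n := by nlinarith
  have hhn : (h₀:ℤ) ≤ n := by nlinarith
  have hn1 : (1:ℤ) ≤ n := by omega
  have hn0 : (0:ℤ) ≤ n := by omega
  have hc0 : (0:ℤ) ≤ c := by omega
  have hcn : c ≤ n := by omega
  intro l
  induction l with
  | nil => intro _ _; left; simp
  | cons e t ih =>
    intro hmem hlen
    have hlen' : t.length ≤ h₀ - 1 := by simp at hlen; omega
    have htlen : (t.length : ℤ) + 1 ≤ c := by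
      rw [hc_def]
      have : t.length + 1 ≤ h₀ - 1 := by simpa using hlen
      omega
    have hlen_n : (t.length : ℤ) ≤ n := by linarith
    have hIH := ih (fun x hx => hmem x (by simp [hx])) hlen'
    have he := hmem e (by simp)
    rcases he with rfl | ⟨r, hr, he⟩
    · -- e = 0
      rcases hIH with hzero | ⟨R, a, b, hR, h1, h2, hb⟩
      · left; intro x hx; rcases List.mem_cons.mp hx with rfl | hx
        · rfl
        · exact hzero x hx
      · right
        refine ⟨R, a, b, hR, h1, by simpa using Nat.le_succ_of_le h2, ?_⟩
        have hB0 : (0:ℤ) ≤ c * n^(R-1) + 1 := by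
          have := mul_nonneg hc0 (pow_nonneg hn0 (R-1)); linarith
        simp only [List.sum_cons, List.length_cons, zero_add]
        push_cast
        exact abs_step hB0 hb
    · -- e is n^r or 1 - c * n^r
      have hpowr : (1:ℤ) ≤ n^r := one_le_pow₀ hn1
      have hpowr1 : (1:ℤ) ≤ n^(r-1) := one_le_pow₀ hn1
      have hBr0 : (0:ℤ) ≤ c * n^(r-1) + 1 := by nlinarith
      have hBr1 : (1:ℤ) ≤ c * n^(r-1) + 1 := by nlinarith
      rcases hIH with hzero | ⟨R, a, b, hR, h1, h2, hb⟩
      · -- tail all zero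
        have hts : t.sum = 0 := List.sum_eq_zero hzero
        right
        rcases he with rfl | rfl
        · refine ⟨r, 1, 0, hr, by norm_num, by simp, ?_⟩
          simp only [List.sum_cons, List.length_cons, hts]
          push_cast
          have h0 : |(n^r + 0) - ((1:ℤ) - c*0) * n^r| = 0 := by
            have : (n^r + 0) - ((1:ℤ) - c*0) * n^r = 0 := by ring
            rw [this, abs_zero]
          rw [h0]
          have : (0:ℤ) ≤ ((t.length:ℤ)+1) * (c * n^(r-1) + 1) :=
            mul_nonneg (by positivity) hBr0
          linarith
        · refine ⟨r, 0, 1, hr, by norm_num, by simp, ?_⟩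
          simp only [List.sum_cons, List.length_cons, hts]
          push_cast
          have h1' : ((1 - c * n^r + 0) - ((0:ℤ) - c*1) * n^r) = 1 := by ring
          rw [h1', abs_one]
          have : (1:ℤ) * (c * n^(r-1) + 1) ≤ ((t.length:ℤ)+1) * (c * n^(r-1) + 1) :=
            mul_le_mul_of_nonneg_right (by omega) hBr0
          linarith
      · -- tail nontrivial with R, a, b
        have hpowR : (1:ℤ) ≤ n^R := one_le_pow₀ hn1
        have hpowR1 : (1:ℤ) ≤ n^(R-1) := one_le_pow₀ hn1
        have hRsplit : n^(R-1) * n = n^R := by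
          rw [← pow_succ]; congr 1; omega
        have hBR0 : (0:ℤ) ≤ c * n^(R-1) + 1 := by nlinarith
        rcases lt_trichotomy r R with hlt | rfl | hgt
        · -- r < R : treat e as junk
          right
          refine ⟨R, a, b, hR, h1, by simpa using Nat.le_succ_of_le h2, ?_⟩
          have hrR : n^r ≤ n^(R-1) := pow_le_pow_right₀ hn1 (by omega)
          have habs : |e| ≤ c * n^(R-1) + 1 := by
            rcases he with rfl | rfl
            · rw [abs_of_nonneg (by positivity)]; nlinarith
            · have h4 : |1 - c * n^r| ≤ 1 + c * n^r := by
                calc |1 - c * n^r| ≤ |(1:ℤ)| + |c * n^r| := abs_sub _ _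
                _ = 1 + c * n^r := by
                    rw [abs_one, abs_of_nonneg (mul_nonneg hc0 (by positivity))]
              nlinarith
          simp only [List.sum_cons, List.length_cons]
          push_cast
          calc |(e + t.sum) - ((a:ℤ) - c*b) * n^R|
              = |e + (t.sum - ((a:ℤ) - c*b) * n^R)| := by ring_nf
            _ ≤ |e| + |t.sum - ((a:ℤ) - c*b) * n^R| := abs_add_le _ _
            _ ≤ (c * n^(R-1) + 1) + (t.length : ℤ) * (c * n^(R-1) + 1) := add_le_add habs hb
            _ = ((t.length : ℤ) + 1) * (c * n^(R-1) + 1) := by ring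
        · -- r = R : update counts
          right
          rcases he with rfl | rfl
          · refine ⟨r, a+1, b, hr, by omega, by simp; omega, ?_⟩
            simp only [List.sum_cons, List.length_cons]
            push_cast
            have heq : (n^r + t.sum) - (((a:ℤ)+1) - c*b) * n^r
                 = t.sum - ((a:ℤ) - c*b) * n^r := by ring
            rw [heq]
            exact abs_step hBr0 hb
          · refine ⟨r, a, b+1, hr, by omega, by simp; omega, ?_⟩
            simp only [List.sum_cons, List.length_cons]
            push_cast
            have heq : ((1 - c * n^r) + t.sum) - ((a:ℤ) - c*((b:ℤ)+1)) * n^r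
                 = (t.sum - ((a:ℤ) - c*b) * n^r) + 1 := by ring
            rw [heq]
            calc |(t.sum - ((a:ℤ) - c*b) * n^r) + 1|
                ≤ |t.sum - ((a:ℤ) - c*b) * n^r| + |(1:ℤ)| := abs_add_le _ _
              _ = |t.sum - ((a:ℤ) - c*b) * n^r| + 1 := by rw [abs_one]
              _ ≤ (t.length : ℤ) * (c * n^(r-1) + 1) + (c * n^(r-1) + 1) := add_le_add hb hBr1
              _ = ((t.length : ℤ) + 1) * (c * n^(r-1) + 1) := by ring
        · -- r > R : new top index
          right
          have hRr1 : n^R ≤ n^(r-1) := pow_le_pow_right₀ hn1 (by omega)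
          have ha0 : (0:ℤ) ≤ (a:ℤ) := Int.ofNat_nonneg a
          have hb0 : (0:ℤ) ≤ (b:ℤ) := Int.ofNat_nonneg b
          have hcoef : |(a:ℤ) - c*b| ≤ c * ((a:ℤ) + b) := by
            rw [abs_le]; constructor <;> nlinarith
          have hab_len : ((a:ℤ) + b) ≤ (t.length : ℤ) := by exact_mod_cast h2
          have hpowRnn : (0:ℤ) ≤ n^R := by positivity
          have htsum : |t.sum| ≤ c * ((a:ℤ)+b) * n^R + (t.length : ℤ) * (c * n^(R-1) + 1) := by
            have tri : |t.sum| ≤ |t.sum - ((a:ℤ) - c*b) * n^R| + |((a:ℤ) - c*b) * n^R| := by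
              have := abs_add_le (t.sum - ((a:ℤ) - c*b) * n^R) (((a:ℤ) - c*b) * n^R)
              simpa using this
            have h3 : |((a:ℤ) - c*b) * n^R| ≤ c * ((a:ℤ)+b) * n^R := by
              rw [abs_mul, abs_of_nonneg hpowRnn]
              exact mul_le_mul_of_nonneg_right hcoef hpowRnn
            linarith
          have k1 : c*((a:ℤ)+b)*n^R ≤ c*(t.length:ℤ)*n^(r-1) := by
            have h1' : c*((a:ℤ)+b) ≤ c*(t.length:ℤ) := mul_le_mul_of_nonneg_left hab_len hc0
            calc c*((a:ℤ)+b)*n^R ≤ c*(t.length:ℤ)*n^R := mul_le_mul_of_nonneg_right h1' hpowRnn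
              _ ≤ c*(t.length:ℤ)*n^(r-1) := by
                  exact mul_le_mul_of_nonneg_left hRr1
                    (mul_nonneg hc0 (Int.ofNat_nonneg _))
          have k2 : (t.length:ℤ)*(c*n^(R-1)) ≤ c*n^(r-1) := by
            have s1 : (t.length:ℤ)*n^(R-1) ≤ n*n^(R-1) :=
              mul_le_mul_of_nonneg_right hlen_n (by positivity)
            calc (t.length:ℤ)*(c*n^(R-1)) = c*((t.length:ℤ)*n^(R-1)) := by ring
              _ ≤ c*(n*n^(R-1)) := mul_le_mul_of_nonneg_left s1 hc0
              _ = c*n^R := by rw [mul_comm n (n^(R-1)), hRsplit]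
              _ ≤ c*n^(r-1) := mul_le_mul_of_nonneg_left hRr1 hc0
          have hfinal : c*((a:ℤ)+b)*n^R + (t.length:ℤ)*(c*n^(R-1)+1) + 1
              ≤ ((t.length:ℤ)+1)*(c*n^(r-1)+1) := by
            have expand : ((t.length:ℤ)+1)*(c*n^(r-1)+1)
                = c*(t.length:ℤ)*n^(r-1) + c*n^(r-1) + (t.length:ℤ) + 1 := by ring
            have expand2 : (t.length:ℤ)*(c*n^(R-1)+1)
                = (t.length:ℤ)*(c*n^(R-1)) + (t.length:ℤ) := by ring
            rw [expand, expand2]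
            linarith
          rcases he with rfl | rfl
          · refine ⟨r, 1, 0, hr, by norm_num, by simp, ?_⟩
            simp only [List.sum_cons, List.length_cons]
            push_cast
            have heq : (n^r + t.sum) - ((1:ℤ) - c*0) * n^r = t.sum := by ring
            rw [heq]
            linarith [htsum, hfinal]
          · refine ⟨r, 0, 1, hr, by norm_num, by simp, ?_⟩
            simp only [List.sum_cons, List.length_cons]
            push_cast
            have heq : ((1 - c * n^r) + t.sum) - ((0:ℤ) - c*1) * n^r = t.sum + 1 := by ring
            rw [heq]
            have tri : |t.sum + 1| ≤ |t.sum| + 1 := by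
              calc |t.sum + 1| ≤ |t.sum| + |(1:ℤ)| := abs_add_le _ _
                _ = |t.sum| + 1 := by rw [abs_one]
            linarith [htsum, hfinal]

lemma hfold_mem_iff {S : Set ℤ} : ∀ {h : ℕ}, 1 ≤ h → ∀ {x : ℤ},
    (x ∈ hfold h S ↔ ∃ l : List ℤ, l.length = h ∧ (∀ a ∈ l, a ∈ S) ∧ l.sum = x) := by
  intro h
  induction h with
  | zero => omega
  | succ n ih =>
    rcases Nat.eq_zero_or_pos n with hn | hn
    · subst hn
      intro _ x
      simp only [hfold]
      constructor
      · intro hx; exact ⟨[x], rfl, by simpa using hx, by simp⟩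
      · rintro ⟨l, hl, hm, hs⟩
        match l, hl with
        | [a], _ =>
          have := hm a (by simp)
          simp at hs; rwa [hs] at this
    · intro _ x
      obtain ⟨m, rfl⟩ : ∃ m, n = m + 1 := ⟨n - 1, by omega⟩
      show x ∈ hfold (m+1) S + S ↔ _
      rw [Set.mem_add]
      constructor
      · rintro ⟨y, hy, a, ha, rfl⟩
        obtain ⟨l, hl, hm2, hs⟩ := (ih hn).mp hy
        exact ⟨a :: l, by simp [hl], by intro b hb; rcases List.mem_cons.mp hb with rfl | hb; exact ha; exact hm2 b hb,
          by simp [hs]; ring⟩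
      · rintro ⟨l, hl, hm2, hs⟩
        match l, hl with
        | a :: t, hl =>
          refine ⟨t.sum, (ih hn).mpr ⟨t, by simpa using hl, fun b hb => hm2 b (by simp [hb]), rfl⟩,
            a, hm2 a (by simp), by simp at hs; omega⟩

lemma hfold_singleton_zero : ∀ h : ℕ, hfold h ({0} : Set ℤ) = {0} := by
  intro h
  induction h with
  | zero => rfl
  | succ n ih =>
    match n, ih with
    | 0, _ => rfl
    | m+1, ih => show hfold (m+1) _ + _ = _ ; rw [ih]; simp

lemma pow_big {m : ℤ} (hm : 2 ≤ m) : ∀ k : ℕ, (k : ℤ) < m ^ k := by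
  intro k
  induction k with
  | zero => simp
  | succ n ih =>
    have h1 : (1:ℤ) ≤ m ^ n := one_le_pow₀ (by omega)
    calc ((n+1 : ℕ) : ℤ) = (n:ℤ) + 1 := by push_cast; ring
    _ < m ^ n + m ^ n := by omega
    _ ≤ m * m ^ n := by nlinarith
    _ = m ^ (n+1) := by ring

set_option maxHeartbeats 1000000 in
lemma key_lemma (h₀ : ℕ) (hh₀ : 2 ≤ h₀) (q : ℕ)
    (l : List ℤ) (hmem : ∀ e ∈ l, inA h₀ q e) (hlen : l.length ≤ h₀ - 1) :
    l.sum = 0 ∨ (2*(h₀:ℤ)^2)^q ≤ |l.sum| := by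
  set n : ℤ := 2*(h₀:ℤ)^2 with hn_def
  set c : ℤ := (h₀:ℤ)-1 with hc_def
  have hh2 : (2:ℤ) ≤ (h₀:ℤ) := by exact_mod_cast hh₀
  have hc : 1 ≤ c := by omega
  have hn2 : 2 ≤ n := by nlinarith
  have hn1 : (1:ℤ) ≤ n := by omega
  have hn0 : (0:ℤ) ≤ n := by omega
  have hc0 : (0:ℤ) ≤ c := by omega
  rcases inv_lemma h₀ hh₀ q l hmem hlen with hzero | ⟨R, a, b, hR, h1, h2, hb⟩
  · exact Or.inl (List.sum_eq_zero hzero)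
  · rw [← hn_def, ← hc_def] at hb
    right
    have hab : (a:ℤ) + (b:ℤ) ≤ c := by
      rw [hc_def]
      have : a + b ≤ h₀ - 1 := le_trans h2 hlen
      omega
    have ha0 : (0:ℤ) ≤ (a:ℤ) := Int.ofNat_nonneg a
    have hb0 : (0:ℤ) ≤ (b:ℤ) := Int.ofNat_nonneg b
    have hab1 : (1:ℤ) ≤ (a:ℤ) + (b:ℤ) := by exact_mod_cast h1
    have hcoef : 1 ≤ |(a:ℤ) - c*(b:ℤ)| := by
      rcases Nat.eq_zero_or_pos b with hbz | hbpos
      · subst hbz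
        rw [abs_of_nonneg (by simpa using ha0)]
        simpa using hab1
      · have hb1 : (1:ℤ) ≤ (b:ℤ) := by exact_mod_cast hbpos
        have : (a:ℤ) - c*(b:ℤ) ≤ -1 := by nlinarith
        rw [abs_of_nonpos (by linarith)]
        linarith
    have hP1 : (1:ℤ) ≤ n^(R-1) := one_le_pow₀ hn1
    have hPq : n^q ≤ n^(R-1) := pow_le_pow_right₀ hn1 (by omega)
    have hsplit : n^(R-1) * n = n^R := by rw [← pow_succ]; congr 1; omega
    have hpowRnn : (0:ℤ) ≤ n^R := by positivity
    -- |l.sum| ≥ |coef*n^R| - bound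
    have tri : |((a:ℤ) - c*(b:ℤ)) * n^R| - |l.sum - ((a:ℤ) - c*(b:ℤ)) * n^R| ≤ |l.sum| := by
      have := abs_sub_abs_le_abs_sub (((a:ℤ) - c*(b:ℤ)) * n^R) l.sum
      have h5 : |((a:ℤ) - c*(b:ℤ)) * n^R - l.sum| = |l.sum - ((a:ℤ) - c*(b:ℤ)) * n^R| :=
        abs_sub_comm _ _
      linarith
    have hcoefpow : n^R ≤ |((a:ℤ) - c*(b:ℤ)) * n^R| := by
      rw [abs_mul, abs_of_nonneg hpowRnn]
      nlinarith
    have hlenc : (l.length : ℤ) ≤ c := by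
      rw [hc_def]
      have : l.length ≤ h₀ - 1 := hlen
      omega
    have hbound : (l.length : ℤ) * (c * n^(R-1) + 1) ≤ c * (c * n^(R-1) + 1) := by
      have hBnn : (0:ℤ) ≤ c * n^(R-1) + 1 := by nlinarith
      exact mul_le_mul_of_nonneg_right hlenc hBnn
    have hnc : c^2 + c + 2 ≤ n := by nlinarith
    have hgoal : n^q ≤ n^R - c*(c*n^(R-1)+1) := by
      have e1 : n^R = n * n^(R-1) := by rw [mul_comm, hsplit]
      rw [e1]
      have hh : (c^2+c+2) * n^(R-1) ≤ n * n^(R-1) :=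
        mul_le_mul_of_nonneg_right hnc (le_trans zero_le_one hP1)
      nlinarith [hh, hP1, hPq, hc]
    linarith [hb, tri, hcoefpow, hbound, hgoal]

set_option maxHeartbeats 1000000 in
theorem stmt19 (h₀ : ℕ) (hh₀ : 2 ≤ h₀) :
    ∃ Aq : ℕ → Set ℤ,
      (∀ q, Aq (q + 1) ⊂ Aq q) ∧
      (∀ h : ℕ, 1 ≤ h → h ≤ h₀ - 1 →
        hfold h (⋂ q, Aq q) = ⋂ q, hfold h (Aq q)) ∧
      hfold h₀ (⋂ q, Aq q) ≠ ⋂ q, hfold h₀ (Aq q) := by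
  have hh2 : (2:ℤ) ≤ (h₀:ℤ) := by exact_mod_cast hh₀
  set n : ℤ := 2*(h₀:ℤ)^2 with hn_def
  set c : ℤ := (h₀:ℤ)-1 with hc_def
  have hc : 1 ≤ c := by omega
  have hn2 : 2 ≤ n := by nlinarith
  have hn1 : (1:ℤ) ≤ n := by omega
  have hn0 : (0:ℤ) ≤ n := by omega
  have hc0 : (0:ℤ) ≤ c := by omega
  set Aq : ℕ → Set ℤ := fun q => {x : ℤ | inA h₀ q x} with hAq_def
  have hmemAq : ∀ q x, x ∈ Aq q ↔
      (x = 0 ∨ ∃ r : ℕ, q + 1 ≤ r ∧ (x = n^r ∨ x = 1 - c * n^r)) := by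
    intro q x
    show inA h₀ q x ↔ _
    rw [inA_def, ← hn_def, ← hc_def]
  have hzeroAq : ∀ q, (0:ℤ) ∈ Aq q := fun q => (hmemAq q 0).mpr (Or.inl rfl)
  have hmono : ∀ q, Aq (q+1) ⊆ Aq q := by
    intro q x hx
    rw [hmemAq] at hx ⊢
    rcases hx with rfl | ⟨r, hr, hx⟩
    · exact Or.inl rfl
    · exact Or.inr ⟨r, by omega, hx⟩
  -- intersection is {0}
  have hiInter : (⋂ q, Aq q) = ({0} : Set ℤ) := by
    ext x
    simp only [Set.mem_iInter, Set.mem_singleton_iff]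
    constructor
    · intro hx
      have hx' := (hmemAq x.natAbs x).mp (hx x.natAbs)
      rcases hx' with rfl | ⟨r, hr, hx'⟩
      · rfl
      · exfalso
        have hrbig : (r:ℤ) < n^r := pow_big hn2 r
        have hrge : (x.natAbs : ℤ) + 1 ≤ (r:ℤ) := by exact_mod_cast hr
        have habs : |x| = (x.natAbs : ℤ) := Int.abs_eq_natAbs x
        have hpow1 : (1:ℤ) ≤ n^r := one_le_pow₀ hn1
        rcases hx' with rfl | rfl
        · rw [abs_of_nonneg (by positivity)] at habs
          linarith
        · have h1 : -(1 - c*n^r) ≤ |1 - c*n^r| := neg_le_abs _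
          have h2 : c*n^r ≥ 1*n^r := mul_le_mul_of_nonneg_right hc (by positivity)
          rw [habs] at h1
          linarith
    · rintro rfl q
      exact hzeroAq q
  -- 0 is in every hfold h (Aq q)
  have hzero_hfold : ∀ q (h : ℕ), 1 ≤ h → (0:ℤ) ∈ hfold h (Aq q) := by
    intro q h h1
    rw [hfold_mem_iff h1]
    refine ⟨List.replicate h 0, List.length_replicate, ?_, ?_⟩
    · intro a ha
      rw [List.eq_of_mem_replicate ha]
      exact hzeroAq q
    · simp
  refine ⟨Aq, ?_, ?_, ?_⟩
  · -- strictly decreasing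
    intro q
    rw [Set.ssubset_iff_of_subset (hmono q)]
    refine ⟨n^(q+1), (hmemAq q _).mpr (Or.inr ⟨q+1, le_refl _, Or.inl rfl⟩), ?_⟩
    intro hmem
    rcases (hmemAq (q+1) _).mp hmem with h0 | ⟨r, hr, hx⟩
    · have : (0:ℤ) < n^(q+1) := by positivity
      omega
    · have hle : n^(q+2) ≤ n^r := pow_le_pow_right₀ hn1 hr
      have hsp : n^(q+2) = n^(q+1) * n := pow_succ n (q+1)
      have hp1 : (1:ℤ) ≤ n^(q+1) := one_le_pow₀ hn1
      have hpr : (1:ℤ) ≤ n^r := one_le_pow₀ hn1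
      rcases hx with heq | heq
      · nlinarith
      · nlinarith [mul_le_mul_of_nonneg_right hc (le_trans zero_le_one hpr)]
  · -- middle range
    intro h h1 h2
    rw [hiInter, hfold_singleton_zero]
    ext x
    simp only [Set.mem_iInter, Set.mem_singleton_iff]
    constructor
    · rintro rfl q
      exact hzero_hfold q h h1
    · intro hx
      have hx' := hx x.natAbs
      rw [hfold_mem_iff h1] at hx'
      obtain ⟨l, hlen, hmem, hsum⟩ := hx'
      have := key_lemma h₀ hh₀ x.natAbs l (fun e he => hmem e he) (by omega)
      rw [hsum, ← hn_def] at this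
      rcases this with h0 | hbig
      · exact h0
      · exfalso
        have habs : |x| = (x.natAbs : ℤ) := Int.abs_eq_natAbs x
        have hq : (x.natAbs : ℤ) < n^x.natAbs := pow_big hn2 x.natAbs
        linarith [habs ▸ hbig]
  · -- h₀ fails
    intro heq
    rw [hiInter, hfold_singleton_zero] at heq
    have h1mem : (1:ℤ) ∈ ⋂ q, hfold h₀ (Aq q) := by
      rw [Set.mem_iInter]
      intro q
      rw [hfold_mem_iff (by omega : 1 ≤ h₀)]
      refine ⟨List.replicate (h₀-1) (n^(q+1)) ++ [1 - c * n^(q+1)], ?_, ?_, ?_⟩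
      · simp; omega
      · intro a ha
        rcases List.mem_append.mp ha with ha | ha
        · rw [List.eq_of_mem_replicate ha]
          exact (hmemAq q _).mpr (Or.inr ⟨q+1, le_refl _, Or.inl rfl⟩)
        · simp at ha
          rw [ha]
          exact (hmemAq q _).mpr (Or.inr ⟨q+1, le_refl _, Or.inr rfl⟩)
      · rw [List.sum_append, List.sum_replicate]
        have hcast : ((h₀ - 1 : ℕ) : ℤ) = c := by rw [hc_def]; omega
        rw [nsmul_eq_mul, hcast]
        simp only [List.sum_cons, List.sum_nil]
        ring
    rw [← heq] at h1mem
    simp at h1mem
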